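/- Let x, y : [s,t] → ℝ be functions and let p ≥ 1. Then the p-variation of the pointwise product xy satisfies ‖xy‖_{p-var;[s,t]} ≤ ‖x‖_{p-var;[s,t]} · ‖y‖_{∞;[s,t]} + ‖y‖_{p-var;[s,t]} · ‖x‖_{∞;[s,t]}, where ‖·‖_{∞;[s,t]} is the supremum norm and ‖g‖_{p-var;[s,t]} = (sup_π Σ_{[t_i,t_{i+1}]∈π} |g(t_{i+1}) − g(t_i)|^p)^{1/p}, the supremum being over all finite partitions π of [s,t]. -/
import Mathlib

/-- `u` is a partition of `[s,t]` into `n` subintervals. -/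
def IsPart (s t : ℝ) (n : ℕ) (u : ℕ → ℝ) : Prop :=
  u 0 = s ∧ u n = t ∧ ∀ i, i < n → u i ≤ u (i + 1)

/-- The set of `p`-variation partition sums of `g` over `[s,t]`. -/
def pvarSet (p s t : ℝ) (g : ℝ → ℝ) : Set ℝ :=
  {v | ∃ n u, IsPart s t n u ∧ v = ∑ i ∈ Finset.range n, |g (u (i + 1)) - g (u i)| ^ p}

/-- The `p`-variation seminorm of `g` on `[s,t]`. -/
noncomputable def pVar (p s t : ℝ) (g : ℝ → ℝ) : ℝ := sSup (pvarSet p s t g) ^ (1 / p)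

/-- The supremum norm of `g` on `[s,t]`. -/
noncomputable def supNorm (s t : ℝ) (g : ℝ → ℝ) : ℝ :=
  sSup ((fun r => |g r|) '' Set.Icc s t)

lemma part_mem_Icc {s t : ℝ} {n : ℕ} {u : ℕ → ℝ} (h : IsPart s t n u) {i : ℕ}
    (hi : i ≤ n) : u i ∈ Set.Icc s t := by
  obtain ⟨h0, hn, hm⟩ := h
  have key : ∀ j k, j ≤ k → k ≤ n → u j ≤ u k := by
    intro j k hjk hkn
    induction k with
    | zero => simp_all
    | succ m ih =>
      rcases Nat.lt_or_ge j (m+1) with hl | hg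
      · exact le_trans (ih (Nat.lt_succ_iff.mp hl) (le_of_lt hkn))
          (hm m (Nat.lt_of_succ_le hkn))
      · have : j = m + 1 := le_antisymm hjk hg
        simp [this]
  constructor
  · rw [← h0]; exact key 0 i (Nat.zero_le _) hi
  · rw [← hn]; exact key i n hi le_rfl

lemma pvarSet_nonempty (p s t : ℝ) (hst : s ≤ t) (g : ℝ → ℝ) :
    (pvarSet p s t g).Nonempty := by
  refine ⟨_, 1, fun i => if i = 0 then s else t, ⟨by simp, by simp, ?_⟩, rfl⟩
  intro i hi
  interval_cases i
  simpa using hst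

lemma sSup_pvar_nonneg (p s t : ℝ) (hst : s ≤ t) (g : ℝ → ℝ)
    (hb : BddAbove (pvarSet p s t g)) : 0 ≤ sSup (pvarSet p s t g) := by
  obtain ⟨v, hv⟩ := pvarSet_nonempty p s t hst g
  obtain ⟨n, u, hu, rfl⟩ := hv
  exact le_trans (Finset.sum_nonneg fun i _ => Real.rpow_nonneg (abs_nonneg _) _)
    (le_csSup hb ⟨n, u, hu, rfl⟩)

lemma supNorm_nonneg (s t : ℝ) (hst : s ≤ t) (g : ℝ → ℝ)
    (hb : BddAbove ((fun r => |g r|) '' Set.Icc s t)) : 0 ≤ supNorm s t g :=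
  le_trans (abs_nonneg (g s)) (le_csSup hb ⟨s, ⟨le_rfl, hst⟩, rfl⟩)

/-- the `p`-variation of a pointwise product satisfies the Leibniz-type bound. -/
theorem stmt3 (s t p : ℝ) (hst : s ≤ t) (hp : 1 ≤ p) (x y : ℝ → ℝ)
    (hx : BddAbove (pvarSet p s t x)) (hy : BddAbove (pvarSet p s t y))
    (hxb : BddAbove ((fun r => |x r|) '' Set.Icc s t))
    (hyb : BddAbove ((fun r => |y r|) '' Set.Icc s t)) :
    pVar p s t (fun r => x r * y r) ≤
      pVar p s t x * supNorm s t y + pVar p s t y * supNorm s t x := by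
  have hp0 : 0 < p := lt_of_lt_of_le one_pos hp
  set Nx := supNorm s t x with hNx
  set Ny := supNorm s t y with hNy
  have hNx0 : 0 ≤ Nx := supNorm_nonneg s t hst x hxb
  have hNy0 : 0 ≤ Ny := supNorm_nonneg s t hst y hyb
  set R := pVar p s t x * Ny + pVar p s t y * Nx with hR
  have hpx0 : 0 ≤ pVar p s t x := Real.rpow_nonneg (sSup_pvar_nonneg p s t hst x hx) _
  have hpy0 : 0 ≤ pVar p s t y := Real.rpow_nonneg (sSup_pvar_nonneg p s t hst y hy) _
  have hR0 : 0 ≤ R := add_nonneg (mul_nonneg hpx0 hNy0) (mul_nonneg hpy0 hNx0)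
  -- each element of the product pvarSet is ≤ R ^ p
  have key : ∀ v ∈ pvarSet p s t (fun r => x r * y r), v ≤ R ^ p := by
    rintro v ⟨n, u, hu, rfl⟩
    have hmem : ∀ i ≤ n, u i ∈ Set.Icc s t := fun i hi => part_mem_Icc hu hi
    set a : ℕ → ℝ := fun i => |x (u (i+1)) - x (u i)| * Ny with ha
    set b : ℕ → ℝ := fun i => |y (u (i+1)) - y (u i)| * Nx with hb
    have ha0 : ∀ i, 0 ≤ a i := fun i => mul_nonneg (abs_nonneg _) hNy0
    have hb0 : ∀ i, 0 ≤ b i := fun i => mul_nonneg (abs_nonneg _) hNx0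
    have step1 : ∑ i ∈ Finset.range n, |x (u (i+1)) * y (u (i+1)) - x (u i) * y (u i)| ^ p
        ≤ ∑ i ∈ Finset.range n, (a i + b i) ^ p := by
      apply Finset.sum_le_sum
      intro i hi
      rw [Finset.mem_range] at hi
      apply Real.rpow_le_rpow (abs_nonneg _) _ (le_of_lt hp0)
      have hxi : |x (u i)| ≤ Nx := le_csSup hxb ⟨u i, hmem i (le_of_lt hi), rfl⟩
      have hyi : |y (u (i+1))| ≤ Ny := le_csSup hyb ⟨u (i+1), hmem (i+1) hi, rfl⟩
      calc |x (u (i+1)) * y (u (i+1)) - x (u i) * y (u i)|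
          = |(x (u (i+1)) - x (u i)) * y (u (i+1)) + x (u i) * (y (u (i+1)) - y (u i))| := by
            ring_nf
        _ ≤ |(x (u (i+1)) - x (u i)) * y (u (i+1))| + |x (u i) * (y (u (i+1)) - y (u i))| :=
            abs_add_le _ _
        _ = |x (u (i+1)) - x (u i)| * |y (u (i+1))| + |y (u (i+1)) - y (u i)| * |x (u i)| := by
            rw [abs_mul, abs_mul]; ring
        _ ≤ a i + b i := by
            apply add_le_add
            · exact mul_le_mul_of_nonneg_left hyi (abs_nonneg _)
            · exact mul_le_mul_of_nonneg_left hxi (abs_nonneg _)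
    have step2 : (∑ i ∈ Finset.range n, (a i + b i) ^ p) ^ (1/p)
        ≤ (∑ i ∈ Finset.range n, (a i) ^ p) ^ (1/p)
          + (∑ i ∈ Finset.range n, (b i) ^ p) ^ (1/p) :=
      Real.Lp_add_le_of_nonneg (Finset.range n) hp (fun i _ => ha0 i) (fun i _ => hb0 i)
    have sumx : (∑ i ∈ Finset.range n, (a i) ^ p) ^ (1/p) ≤ pVar p s t x * Ny := by
      have : ∑ i ∈ Finset.range n, (a i) ^ p
          = (∑ i ∈ Finset.range n, |x (u (i+1)) - x (u i)| ^ p) * Ny ^ p := by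
        rw [Finset.sum_mul]
        exact Finset.sum_congr rfl fun i _ =>
          Real.mul_rpow (abs_nonneg _) hNy0
      rw [this, Real.mul_rpow (Finset.sum_nonneg fun i _ =>
          Real.rpow_nonneg (abs_nonneg _) _) (Real.rpow_nonneg hNy0 _),
        ← Real.rpow_mul hNy0, mul_one_div_cancel (ne_of_gt hp0), Real.rpow_one]
      apply mul_le_mul_of_nonneg_right _ hNy0
      apply Real.rpow_le_rpow (Finset.sum_nonneg fun i _ =>
        Real.rpow_nonneg (abs_nonneg _) _) _ (by positivity)
      exact le_csSup hx ⟨n, u, hu, rfl⟩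
    have sumy : (∑ i ∈ Finset.range n, (b i) ^ p) ^ (1/p) ≤ pVar p s t y * Nx := by
      have : ∑ i ∈ Finset.range n, (b i) ^ p
          = (∑ i ∈ Finset.range n, |y (u (i+1)) - y (u i)| ^ p) * Nx ^ p := by
        rw [Finset.sum_mul]
        exact Finset.sum_congr rfl fun i _ =>
          Real.mul_rpow (abs_nonneg _) hNx0
      rw [this, Real.mul_rpow (Finset.sum_nonneg fun i _ =>
          Real.rpow_nonneg (abs_nonneg _) _) (Real.rpow_nonneg hNx0 _),
        ← Real.rpow_mul hNx0, mul_one_div_cancel (ne_of_gt hp0), Real.rpow_one]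
      apply mul_le_mul_of_nonneg_right _ hNx0
      apply Real.rpow_le_rpow (Finset.sum_nonneg fun i _ =>
        Real.rpow_nonneg (abs_nonneg _) _) _ (by positivity)
      exact le_csSup hy ⟨n, u, hu, rfl⟩
    -- combine: v^(1/p) ≤ R, hence v ≤ R^p
    have hv0 : 0 ≤ ∑ i ∈ Finset.range n,
        |x (u (i+1)) * y (u (i+1)) - x (u i) * y (u i)| ^ p :=
      Finset.sum_nonneg fun i _ => Real.rpow_nonneg (abs_nonneg _) _
    have hvp : (∑ i ∈ Finset.range n,
        |x (u (i+1)) * y (u (i+1)) - x (u i) * y (u i)| ^ p) ^ (1/p) ≤ R := by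
      calc _ ≤ (∑ i ∈ Finset.range n, (a i + b i) ^ p) ^ (1/p) :=
            Real.rpow_le_rpow hv0 step1 (by positivity)
        _ ≤ _ := step2
        _ ≤ R := add_le_add sumx sumy
    calc (∑ i ∈ Finset.range n, |x (u (i+1)) * y (u (i+1)) - x (u i) * y (u i)| ^ p)
        = ((∑ i ∈ Finset.range n,
            |x (u (i+1)) * y (u (i+1)) - x (u i) * y (u i)| ^ p) ^ (1/p)) ^ p := by
          rw [← Real.rpow_mul hv0, one_div_mul_cancel (ne_of_gt hp0), Real.rpow_one]
      _ ≤ R ^ p := Real.rpow_le_rpow (Real.rpow_nonneg hv0 _) hvp (le_of_lt hp0)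
  have hsup : sSup (pvarSet p s t (fun r => x r * y r)) ≤ R ^ p :=
    csSup_le (pvarSet_nonempty p s t hst _) key
  have h0 : 0 ≤ sSup (pvarSet p s t (fun r => x r * y r)) := by
    refine sSup_pvar_nonneg p s t hst _ ⟨R ^ p, fun v hv => key v hv⟩
  calc pVar p s t (fun r => x r * y r)
      = sSup (pvarSet p s t (fun r => x r * y r)) ^ (1/p) := rfl
    _ ≤ (R ^ p) ^ (1/p) := Real.rpow_le_rpow h0 hsup (by positivity)
    _ = R := by rw [← Real.rpow_mul hR0, mul_one_div_cancel (ne_of_gt hp0), Real.rpow_one]
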